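/- The algebras S(0,q,0,b,0,d) and S(0,q',0,b',0,d') are isomorphic if and only if there exist x,y,w ∈ K with xw ≠ 0 such that x²+q'y²+(b'+d')xy = w, q'w = q, q'y+b'x = b, and q'y+d'x = d. -/

import Mathlib

/-- The 2-dimensional algebra S(p,q,a,b,c,d) on K² with basis e = (1,0), f = (0,1) and
multiplication e² = f, f² = pe+qf, ef = ae+bf, fe = ce+df. -/
def mulS {K : Type*} [Field K] (p q a b c d : K) (x y : K × K) : K × K :=
  (x.1*y.2*a + x.2*y.1*c + x.2*y.2*p,
   x.1*y.1 + x.1*y.2*b + x.2*y.1*d + x.2*y.2*q)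

/-- Endo-commutativity: (xy)² = x²y² for all x, y. -/
def IsEC {K : Type*} [Field K] (m : K × K → K × K → K × K) : Prop :=
  ∀ x y : K × K, m (m x y) (m x y) = m (m x x) (m y y)

/-- Two multiplications on K² give isomorphic algebras iff there is a bijective
K-linear map preserving multiplication. -/
def AlgIso {K : Type*} [Field K] (m₁ m₂ : K × K → K × K → K × K) : Prop :=
  ∃ φ : (K × K) ≃ₗ[K] (K × K), ∀ u v : K × K, φ (m₁ u v) = m₂ (φ u) (φ v)

/-- S(0,q,0,b,0,d) ≅ S(0,q',0,b',0,d') iff there exist x,y,w with xw ≠ 0 satisfying (7). -/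
theorem stmt7 {K : Type*} [Field K] (q b d q' b' d' : K) :
    AlgIso (mulS 0 q 0 b 0 d) (mulS 0 q' 0 b' 0 d') ↔
      ∃ x y w : K, x*w ≠ 0 ∧
        x^2 + q'*y^2 + (b' + d')*x*y = w ∧
        q'*w = q ∧
        q'*y + b'*x = b ∧
        q'*y + d'*x = d := by
  constructor
  · rintro ⟨φ, hφ⟩
    have hsc : ∀ c : K, φ (0, c) = c • φ (0,1) := by
      intro c
      rw [show ((0:K), c) = c • ((0:K),(1:K)) by simp, map_smul]
    have h1 := hφ (1,0) (1,0)
    have h2 := hφ (0,1) (0,1)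
    have h3 := hφ (1,0) (0,1)
    have h4 := hφ (0,1) (1,0)
    simp only [mulS] at h1 h2 h3 h4
    norm_num at h1 h2 h3 h4
    rw [hsc] at h2 h3 h4
    have hB1 : (φ (0,1)).1 = 0 := by rw [h1]
    have hBw : (φ (0,1)).2 = (φ (1,0)).1 * (φ (1,0)).1 + (φ (1,0)).1 * (φ (1,0)).2 * b'
        + (φ (1,0)).2 * (φ (1,0)).1 * d' + (φ (1,0)).2 * (φ (1,0)).2 * q' := by rw [h1]
    have hBne : φ (0,1) ≠ 0 := by
      intro h
      have := φ.injective (h.trans (map_zero φ).symm)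
      simp [Prod.ext_iff] at this
    have hwne : (φ (0,1)).2 ≠ 0 := by
      intro h
      exact hBne (Prod.ext_iff.mpr ⟨hB1, h⟩)
    have hxne : (φ (1,0)).1 ≠ 0 := by
      intro hx0
      have e1 : φ (((φ (1,0)).2 / (φ (0,1)).2) • ((0:K),(1:K))) = φ (1,0) := by
        rw [map_smul]
        refine Prod.ext_iff.mpr ⟨?_, ?_⟩
        · simp [hB1, hx0]
        · simp only [Prod.smul_snd, smul_eq_mul]
          field_simp
      have := congrArg Prod.fst (φ.injective e1)
      simp at this
    have h2' := congrArg Prod.snd h2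
    have h3' := congrArg Prod.snd h3
    have h4' := congrArg Prod.snd h4
    simp only [Prod.smul_snd, smul_eq_mul, hB1] at h2' h3' h4'
    refine ⟨(φ (1,0)).1, (φ (1,0)).2, (φ (0,1)).2, mul_ne_zero hxne hwne,
      by linear_combination -hBw, ?_, ?_, ?_⟩
    · exact mul_right_cancel₀ hwne (by linear_combination -h2')
    · exact mul_right_cancel₀ hwne (by linear_combination -h3')
    · exact mul_right_cancel₀ hwne (by linear_combination -h4')
  · rintro ⟨x, y, w, hxw, h1, h2, h3, h4⟩
    have hx : x ≠ 0 := fun h => hxw (by simp [h])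
    have hw : w ≠ 0 := fun h => hxw (by simp [h])
    subst h1 h2 h3 h4
    refine ⟨⟨⟨⟨fun u => (x*u.1, y*u.1 + (x^2 + q'*y^2 + (b'+d')*x*y)*u.2), ?_⟩, ?_⟩,
      fun v => (v.1/x, (v.2*x - y*v.1)/((x^2 + q'*y^2 + (b'+d')*x*y)*x)), ?_, ?_⟩, ?_⟩
    · intro u v; simp [Prod.ext_iff]; constructor <;> ring
    · intro c u; simp [Prod.ext_iff]; constructor <;> ring
    · intro u
      simp only [Prod.ext_iff]
      constructor
      · field_simp
      · rw [div_eq_iff (mul_ne_zero hw hx)]; ring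
    · intro v
      simp only [Prod.ext_iff]
      constructor
      · field_simp
      · simp only [mul_div_assoc', mul_div_mul_left _ _ hw]; field_simp; ring
    · intro u v
      simp only [mulS, LinearEquiv.coe_mk, LinearMap.coe_mk, AddHom.coe_mk, Prod.ext_iff]
      constructor <;> ring
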